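/- Let Ω ⊆ ℝⁿ be a convex compact set, let F : ℝⁿ → ℝᵐ be L-smooth on Ω (i.e. F is differentiable with ∇F Lipschitz continuous with constant L on Ω), and let g : ℝᵐ → ℝ be a finite-valued concave function with Lipschitz constant ℓ on the set F(Ω) + unit ball. Then g ∘ F has the descent property on Ω with constant ℓL: for all x, y ∈ Ω, g(F(y)) ≤ g(F(x)) + dg(F(x))(∇F(x)(y − x)) + (ℓL/2)‖y − x‖², where dg(F(x))(∇F(x)(y − x)) = d(g ∘ F)(x)(y − x). -/

import Mathlib

open Filter Topology Set

/-- The subderivative `df(x̄)(w) := liminf_{t↓0, w'→w} (f(x̄ + t w') − f(x̄))/t`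
of an extended-real-valued function. -/
noncomputable def subderiv {n : ℕ} (f : EuclideanSpace ℝ (Fin n) → EReal)
    (x w : EuclideanSpace ℝ (Fin n)) : EReal :=
  Filter.liminf
    (fun p : ℝ × EuclideanSpace ℝ (Fin n) =>
      (((p.1)⁻¹ : ℝ) : EReal) * (f (x + p.1 • p.2) - f x))
    ((𝓝[>] (0:ℝ)) ×ˢ 𝓝 w)

/-- `F` is semi-differentiable at `x` for the direction `w` with semi-derivative `d`:
`d = lim_{t↓0, w'→w} (F(x + t w') − F(x))/t`. -/
def HasSemiderivAt {E V : Type*} [NormedAddCommGroup E] [NormedSpace ℝ E]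
    [NormedAddCommGroup V] [NormedSpace ℝ V]
    (F : E → V) (x w : E) (d : V) : Prop :=
  Filter.Tendsto (fun p : ℝ × E => (p.1)⁻¹ • (F (x + p.1 • p.2) - F x))
    ((𝓝[>] (0:ℝ)) ×ˢ 𝓝 w) (𝓝 d)

section DescentHelpers
variable {V : Type*} [NormedAddCommGroup V] [NormedSpace ℝ V]

/-- slope of g at v in direction w -/
noncomputable def gslope (g : V → ℝ) (v w : V) (t : ℝ) : ℝ := (g (v + t • w) - g v) / t

lemma gslope_anti {g : V → ℝ} (hg : ConcaveOn ℝ Set.univ g) (v w : V) {s t : ℝ}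
    (hs : 0 < s) (hst : s ≤ t) : gslope g v w t ≤ gslope g v w s := by
  have ht : 0 < t := hs.trans_le hst
  have ha : 0 ≤ 1 - s / t := by
    have : s / t ≤ 1 := (div_le_one ht).2 hst
    linarith
  have hb : (0:ℝ) ≤ s / t := by positivity
  have hconc := hg.2 (Set.mem_univ v) (Set.mem_univ (v + t • w)) ha hb (by ring)
  have hpt : (1 - s / t) • v + (s / t) • (v + t • w) = v + s • w := by
    rw [smul_add, smul_smul]
    have : s / t * t = s := div_mul_cancel₀ s ht.ne'
    rw [this]
    module
  rw [hpt] at hconc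
  have h2 : (1 - s / t) * g v + (s / t) * g (v + t • w) ≤ g (v + s • w) := by
    simpa using hconc
  unfold gslope
  rw [div_le_div_iff₀ ht hs]
  have h3 : ((1 - s / t) * g v + s / t * g (v + t • w)) * t ≤ g (v + s • w) * t :=
    mul_le_mul_of_nonneg_right h2 ht.le
  have h4 : ((1 - s / t) * g v + s / t * g (v + t • w)) * t
      = g v * t + s * (g (v + t • w) - g v) := by field_simp; ring
  rw [h4] at h3
  nlinarith [h3]

lemma gslope_le {g : V → ℝ} (hg : ConcaveOn ℝ Set.univ g) {ℓ : NNReal} {v : V}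
    (hLip : LipschitzOnWith ℓ g (Metric.closedBall v 1)) (w : V) {t : ℝ} (ht : 0 < t) :
    gslope g v w t ≤ ℓ * ‖w‖ := by
  set s : ℝ := min t (‖w‖ + 1)⁻¹ with hsdef
  have hw1 : (0:ℝ) < ‖w‖ + 1 := by positivity
  have hs : 0 < s := lt_min ht (by positivity)
  have hst : s ≤ t := min_le_left _ _
  have hsw : ‖s • w‖ ≤ 1 := by
    rw [norm_smul, Real.norm_eq_abs, abs_of_pos hs]
    calc s * ‖w‖ ≤ (‖w‖ + 1)⁻¹ * ‖w‖ :=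
          mul_le_mul_of_nonneg_right (min_le_right _ _) (norm_nonneg w)
      _ ≤ 1 := by rw [inv_mul_le_iff₀ hw1]; linarith
  have hmem : v + s • w ∈ Metric.closedBall v 1 := by
    simpa [Metric.mem_closedBall, dist_eq_norm] using hsw
  have hd := hLip.dist_le_mul _ hmem _ (Metric.mem_closedBall_self zero_le_one)
  rw [Real.dist_eq, dist_eq_norm] at hd
  have hd' : |g (v + s • w) - g v| ≤ ℓ * (s * ‖w‖) := by
    calc |g (v + s • w) - g v| ≤ ℓ * ‖v + s • w - v‖ := hd
      _ = ℓ * (s * ‖w‖) := by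
          rw [add_sub_cancel_left, norm_smul, Real.norm_eq_abs, abs_of_pos hs]
  have h1 : gslope g v w s ≤ ℓ * ‖w‖ := by
    unfold gslope
    rw [div_le_iff₀ hs]
    calc g (v + s • w) - g v ≤ |g (v + s • w) - g v| := le_abs_self _
      _ ≤ ℓ * (s * ‖w‖) := hd'
      _ = ℓ * ‖w‖ * s := by ring
  exact (gslope_anti hg v w hs hst).trans h1

/-- the (one-sided) directional derivative of a concave function -/
noncomputable def dirD (g : V → ℝ) (v w : V) : ℝ := sSup (gslope g v w '' Set.Ioi 0)

lemma dirD_bddAbove {g : V → ℝ} (hg : ConcaveOn ℝ Set.univ g) {ℓ : NNReal} {v : V}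
    (hLip : LipschitzOnWith ℓ g (Metric.closedBall v 1)) (w : V) :
    BddAbove (gslope g v w '' Set.Ioi 0) := by
  refine ⟨ℓ * ‖w‖, ?_⟩
  rintro r ⟨t, ht, rfl⟩
  exact gslope_le hg hLip w ht

lemma gslope_le_dirD {g : V → ℝ} (hg : ConcaveOn ℝ Set.univ g) {ℓ : NNReal} {v : V}
    (hLip : LipschitzOnWith ℓ g (Metric.closedBall v 1)) (w : V) {t : ℝ} (ht : 0 < t) :
    gslope g v w t ≤ dirD g v w :=
  le_csSup (dirD_bddAbove hg hLip w) ⟨t, ht, rfl⟩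

lemma tendsto_gslope {g : V → ℝ} (hg : ConcaveOn ℝ Set.univ g) {ℓ : NNReal} {v : V}
    (hLip : LipschitzOnWith ℓ g (Metric.closedBall v 1)) (w : V) :
    Tendsto (fun p : ℝ × V => (g (v + p.1 • p.2) - g v) / p.1)
      ((𝓝[>] (0:ℝ)) ×ˢ 𝓝 w) (𝓝 (dirD g v w)) := by
  set D := dirD g v w with hD
  rw [Metric.tendsto_nhds]
  intro ε hε
  have hne : (gslope g v w '' Set.Ioi 0).Nonempty := ⟨gslope g v w 1, 1, Set.mem_Ioi.2 one_pos, rfl⟩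
  obtain ⟨r₁, hr₁mem, hr₁⟩ := exists_lt_of_lt_csSup hne (show D - ε/2 < sSup _ by
    have : sSup (gslope g v w '' Set.Ioi 0) = D := rfl
    rw [this]; linarith)
  obtain ⟨t₁, ht₁, rfl⟩ := hr₁mem
  have hc : (0:ℝ) ≤ ℓ := ℓ.coe_nonneg
  set r : ℝ := min (ε / (2 * (ℓ + 1))) 1 with hrdef
  have hr : 0 < r := lt_min (by positivity) one_pos
  set δ : ℝ := min t₁ (‖w‖ + 2)⁻¹ with hδdef
  have hδ : 0 < δ := lt_min ht₁ (by positivity)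
  have hmem : Set.Ioo (0:ℝ) δ ×ˢ Metric.ball w r ∈ (𝓝[>] (0:ℝ)) ×ˢ 𝓝 w :=
    Filter.prod_mem_prod (Ioo_mem_nhdsGT_of_mem ⟨le_refl 0, hδ⟩) (Metric.ball_mem_nhds w hr)
  filter_upwards [hmem] with p hp
  obtain ⟨⟨ht0, htδ⟩, hw'⟩ := hp
  set t := p.1
  set w' := p.2
  rw [Metric.mem_ball, dist_eq_norm] at hw'
  have hw2 : (0:ℝ) < ‖w‖ + 2 := by positivity
  have hnw' : ‖w'‖ < ‖w‖ + 1 := by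
    have := norm_le_norm_add_norm_sub' w' w
    have hr1 : r ≤ 1 := min_le_right _ _
    calc ‖w'‖ ≤ ‖w‖ + ‖w' - w‖ := by
          simpa [norm_sub_rev] using this
      _ < ‖w‖ + 1 := by linarith [hw'.trans_le hr1]
  have htw' : ‖t • w'‖ ≤ 1 := by
    rw [norm_smul, Real.norm_eq_abs, abs_of_pos ht0]
    have h1 : t * ‖w'‖ ≤ (‖w‖ + 2)⁻¹ * (‖w‖ + 2) := by
      apply mul_le_mul (le_of_lt (htδ.trans_le (min_le_right _ _))) (by linarith)
        (norm_nonneg _) (by positivity)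
    rw [inv_mul_cancel₀ hw2.ne'] at h1
    exact h1
  have htw : ‖t • w‖ ≤ 1 := by
    rw [norm_smul, Real.norm_eq_abs, abs_of_pos ht0]
    have h1 : t * ‖w‖ ≤ (‖w‖ + 2)⁻¹ * (‖w‖ + 2) := by
      apply mul_le_mul (le_of_lt (htδ.trans_le (min_le_right _ _))) (by linarith)
        (norm_nonneg _) (by positivity)
    rw [inv_mul_cancel₀ hw2.ne'] at h1
    exact h1
  have hmem1 : v + t • w' ∈ Metric.closedBall v 1 := by
    simpa [Metric.mem_closedBall, dist_eq_norm] using htw'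
  have hmem2 : v + t • w ∈ Metric.closedBall v 1 := by
    simpa [Metric.mem_closedBall, dist_eq_norm] using htw
  have hd := hLip.dist_le_mul _ hmem1 _ hmem2
  rw [Real.dist_eq, dist_eq_norm] at hd
  have hnorm : ‖v + t • w' - (v + t • w)‖ = t * ‖w' - w‖ := by
    rw [show v + t • w' - (v + t • w) = t • (w' - w) by module, norm_smul,
      Real.norm_eq_abs, abs_of_pos ht0]
  rw [hnorm] at hd
  -- difference of quotients bounded by ℓ * r
  have hq : |g (v + t • w') - g (v + t • w)| / t ≤ ℓ * ‖w' - w‖ := by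
    rw [div_le_iff₀ ht0]
    calc |g (v + t • w') - g (v + t • w)| ≤ ℓ * (t * ‖w' - w‖) := hd
      _ = ℓ * ‖w' - w‖ * t := by ring
  have hℓr : (ℓ:ℝ) * ‖w' - w‖ < ε / 2 := by
    have h1 : (ℓ:ℝ) * ‖w' - w‖ ≤ ℓ * r := by
      apply mul_le_mul_of_nonneg_left hw'.le hc
    have h2 : (ℓ:ℝ) * r ≤ ℓ * (ε / (2 * (ℓ + 1))) :=
      mul_le_mul_of_nonneg_left (min_le_left _ _) hc
    have h3 : (ℓ:ℝ) * (ε / (2 * (ℓ + 1))) < ε / 2 := by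
      rw [mul_div_assoc'] at *
      rw [div_lt_div_iff₀ (by positivity) (by norm_num)]
      nlinarith
    linarith
  -- slope bounds
  have hslope_ub : gslope g v w t ≤ D := gslope_le_dirD hg hLip w ht0
  have hslope_lb : D - ε / 2 < gslope g v w t := by
    have : gslope g v w t₁ ≤ gslope g v w t :=
      gslope_anti hg v w ht0 (le_of_lt (htδ.trans_le (min_le_left _ _)))
    linarith
  have hQdiff : |(g (v + t • w') - g v) / t - gslope g v w t| < ε / 2 := by
    have : (g (v + t • w') - g v) / t - gslope g v w t
        = (g (v + t • w') - g (v + t • w)) / t := by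
      unfold gslope; rw [div_sub_div_same]; ring_nf
    rw [this]
    calc |(g (v + t • w') - g (v + t • w)) / t|
        = |g (v + t • w') - g (v + t • w)| / t := by
          rw [abs_div, abs_of_pos ht0]
      _ ≤ ℓ * ‖w' - w‖ := hq
      _ < ε / 2 := hℓr
  rw [Real.dist_eq, abs_sub_lt_iff]
  rw [abs_sub_lt_iff] at hQdiff
  constructor <;> linarith [hQdiff.1, hQdiff.2]

lemma sub_le_dirD {g : V → ℝ} (hg : ConcaveOn ℝ Set.univ g) {ℓ : NNReal} {v : V}
    (hLip : LipschitzOnWith ℓ g (Metric.closedBall v 1)) (u : V) :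
    g (v + u) - g v ≤ dirD g v u := by
  have := gslope_le_dirD hg hLip u one_pos
  simpa [gslope] using this

lemma dirD_add_le {g : V → ℝ} (hg : ConcaveOn ℝ Set.univ g) {ℓ : NNReal} {v : V}
    (hLip : LipschitzOnWith ℓ g (Metric.closedBall v 1)) (w e : V) :
    dirD g v (w + e) ≤ dirD g v w + ℓ * ‖e‖ := by
  have hne : (gslope g v (w + e) '' Set.Ioi 0).Nonempty :=
    ⟨gslope g v (w + e) 1, 1, Set.mem_Ioi.2 one_pos, rfl⟩
  apply csSup_le hne
  rintro r ⟨t, ht, rfl⟩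
  rw [Set.mem_Ioi] at ht
  have hwe1 : (0:ℝ) < ‖w‖ + ‖e‖ + 1 := by positivity
  set s : ℝ := min t (‖w‖ + ‖e‖ + 1)⁻¹ with hsdef
  have hs : 0 < s := lt_min ht (by positivity)
  have hst : s ≤ t := min_le_left _ _
  have hsb : s ≤ (‖w‖ + ‖e‖ + 1)⁻¹ := min_le_right _ _
  have h1 : gslope g v (w + e) t ≤ gslope g v (w + e) s := gslope_anti hg v _ hs hst
  have hmemw : v + s • w ∈ Metric.closedBall v 1 := by
    simp only [Metric.mem_closedBall, dist_eq_norm, add_sub_cancel_left]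
    rw [norm_smul, Real.norm_eq_abs, abs_of_pos hs]
    calc s * ‖w‖ ≤ (‖w‖ + ‖e‖ + 1)⁻¹ * (‖w‖ + ‖e‖ + 1) :=
          mul_le_mul hsb (by linarith [norm_nonneg e]) (norm_nonneg _) (by positivity)
      _ = 1 := inv_mul_cancel₀ hwe1.ne'
  have hmemwe : v + s • (w + e) ∈ Metric.closedBall v 1 := by
    simp only [Metric.mem_closedBall, dist_eq_norm, add_sub_cancel_left]
    rw [norm_smul, Real.norm_eq_abs, abs_of_pos hs]
    calc s * ‖w + e‖ ≤ (‖w‖ + ‖e‖ + 1)⁻¹ * (‖w‖ + ‖e‖ + 1) :=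
          mul_le_mul hsb (by linarith [norm_add_le w e]) (norm_nonneg _) (by positivity)
      _ = 1 := inv_mul_cancel₀ hwe1.ne'
  have hd := hLip.dist_le_mul _ hmemwe _ hmemw
  rw [Real.dist_eq, dist_eq_norm] at hd
  have hnorm : ‖v + s • (w + e) - (v + s • w)‖ = s * ‖e‖ := by
    rw [show v + s • (w + e) - (v + s • w) = s • e by module, norm_smul,
      Real.norm_eq_abs, abs_of_pos hs]
  rw [hnorm] at hd
  have h2 : gslope g v (w + e) s ≤ gslope g v w s + ℓ * ‖e‖ := by
    unfold gslope
    rw [div_add' _ _ _ hs.ne', div_le_div_iff₀ hs hs]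
    have habs : g (v + s • (w + e)) - g (v + s • w) ≤ ℓ * (s * ‖e‖) :=
      (le_abs_self _).trans hd
    nlinarith [habs, hs]
  have h3 : gslope g v w s ≤ dirD g v w := gslope_le_dirD hg hLip w hs
  linarith

lemma subderiv_eq_dirD {m : ℕ} {g : EuclideanSpace ℝ (Fin m) → ℝ}
    (hg : ConcaveOn ℝ Set.univ g) {ℓ : NNReal} {v : EuclideanSpace ℝ (Fin m)}
    (hLip : LipschitzOnWith ℓ g (Metric.closedBall v 1)) (w : EuclideanSpace ℝ (Fin m)) :
    subderiv (fun u => ((g u : ℝ) : EReal)) v w = ((dirD g v w : ℝ) : EReal) := by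
  unfold subderiv
  have h1 : (fun p : ℝ × EuclideanSpace ℝ (Fin m) =>
      (((p.1)⁻¹ : ℝ) : EReal) * (((g (v + p.1 • p.2) : ℝ) : EReal) - ((g v : ℝ) : EReal)))
      = fun p => (((g (v + p.1 • p.2) - g v) / p.1 : ℝ) : EReal) := by
    funext p
    rw [← EReal.coe_sub, ← EReal.coe_mul]
    congr 1
    rw [div_eq_inv_mul]
  rw [h1]
  have h2 : Tendsto (fun p : ℝ × EuclideanSpace ℝ (Fin m) =>
      (((g (v + p.1 • p.2) - g v) / p.1 : ℝ) : EReal))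
      ((𝓝[>] (0:ℝ)) ×ˢ 𝓝 w) (𝓝 ((dirD g v w : ℝ) : EReal)) := by
    exact (continuous_coe_real_ereal.tendsto _).comp (tendsto_gslope hg hLip w)
  exact h2.liminf_eq

lemma tendsto_semideriv {E W : Type*} [NormedAddCommGroup E] [NormedSpace ℝ E]
    [NormedAddCommGroup W] [NormedSpace ℝ W]
    {F : E → W} {F' : E →L[ℝ] W} {x : E} (hF : HasFDerivAt F F' x) (w₀ : E) :
    Tendsto (fun p : ℝ × E => (p.1)⁻¹ • (F (x + p.1 • p.2) - F x))
      ((𝓝[>] (0:ℝ)) ×ˢ 𝓝 w₀) (𝓝 (F' w₀)) := by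
  set l := (𝓝[>] (0:ℝ)) ×ˢ (𝓝 w₀) with hl
  have hpos : ∀ᶠ p : ℝ × E in l, 0 < p.1 := by
    have : Set.Ioi (0:ℝ) ×ˢ (Set.univ : Set E) ∈ l :=
      Filter.prod_mem_prod self_mem_nhdsWithin Filter.univ_mem
    filter_upwards [this] with p hp using hp.1
  have hR : (fun u => F (x + u) - F x - F' u) =o[𝓝 0] fun u => u :=
    hasFDerivAt_iff_isLittleO_nhds_zero.1 hF
  have ht1 : Tendsto (fun p : ℝ × E => p.1) l (𝓝 0) :=
    Filter.tendsto_fst.mono_right nhdsWithin_le_nhds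
  have hsnd : Tendsto (fun p : ℝ × E => p.2) l (𝓝 w₀) := Filter.tendsto_snd
  have husmul : Tendsto (fun p : ℝ × E => p.1 • p.2) l (𝓝 0) := by
    have := ht1.smul hsnd
    simpa using this
  have hrem : Tendsto (fun p : ℝ × E => (p.1)⁻¹ • (F (x + p.1 • p.2) - F x - F' (p.1 • p.2)))
      l (𝓝 0) := by
    rw [NormedAddCommGroup.tendsto_nhds_zero]
    intro ε hε
    have hw1 : (0:ℝ) < ‖w₀‖ + 1 := by positivity
    set c : ℝ := ε / (2 * (‖w₀‖ + 1)) with hc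
    have hcpos : 0 < c := by positivity
    have hRc : ∀ᶠ u in 𝓝 (0:E), ‖F (x + u) - F x - F' u‖ ≤ c * ‖u‖ := hR.def hcpos
    have hbound : ∀ᶠ p : ℝ × E in l, ‖p.2‖ < ‖w₀‖ + 1 := by
      have hball : Metric.ball w₀ 1 ∈ 𝓝 w₀ := Metric.ball_mem_nhds _ one_pos
      filter_upwards [hsnd.eventually_mem hball] with p hp
      rw [Metric.mem_ball, dist_eq_norm] at hp
      calc ‖p.2‖ ≤ ‖w₀‖ + ‖p.2 - w₀‖ := by
            simpa [norm_sub_rev] using norm_le_norm_add_norm_sub' p.2 w₀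
        _ < ‖w₀‖ + 1 := by linarith
    filter_upwards [husmul.eventually hRc, hbound, hpos] with p hp1 hp2 hp3
    have hnorm : ‖(p.1)⁻¹ • (F (x + p.1 • p.2) - F x - F' (p.1 • p.2))‖
        = (p.1)⁻¹ * ‖F (x + p.1 • p.2) - F x - F' (p.1 • p.2)‖ := by
      rw [norm_smul, Real.norm_eq_abs, abs_of_pos (inv_pos.2 hp3)]
    rw [hnorm]
    have h1 : (p.1)⁻¹ * ‖F (x + p.1 • p.2) - F x - F' (p.1 • p.2)‖
        ≤ (p.1)⁻¹ * (c * ‖p.1 • p.2‖) :=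
      mul_le_mul_of_nonneg_left hp1 (inv_nonneg.2 hp3.le)
    have h2 : ‖p.1 • p.2‖ = p.1 * ‖p.2‖ := by
      rw [norm_smul, Real.norm_eq_abs, abs_of_pos hp3]
    have h3 : (p.1)⁻¹ * (c * ‖p.1 • p.2‖) = c * ‖p.2‖ := by
      rw [h2]; field_simp
    have h4 : c * ‖p.2‖ ≤ c * (‖w₀‖ + 1) := mul_le_mul_of_nonneg_left hp2.le hcpos.le
    have h5 : c * (‖w₀‖ + 1) = ε / 2 := by
      rw [hc]; field_simp
    calc (p.1)⁻¹ * ‖F (x + p.1 • p.2) - F x - F' (p.1 • p.2)‖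
        ≤ c * ‖p.2‖ := by rw [← h3]; exact h1
      _ ≤ ε / 2 := by rw [← h5]; exact h4
      _ < ε := by linarith
  have hlin : Tendsto (fun p : ℝ × E => F' p.2) l (𝓝 (F' w₀)) :=
    (F'.continuous.tendsto w₀).comp hsnd
  have hsum := hrem.add hlin
  rw [zero_add] at hsum
  apply hsum.congr'
  filter_upwards [hpos] with p hp
  have : (p.1)⁻¹ • (F (x + p.1 • p.2) - F x - F' (p.1 • p.2)) + F' p.2
      = (p.1)⁻¹ • (F (x + p.1 • p.2) - F x) := by
    rw [smul_sub]
    have : (p.1)⁻¹ • F' (p.1 • p.2) = F' p.2 := by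
      rw [F'.map_smul, smul_smul, inv_mul_cancel₀ hp.ne', one_smul]
    rw [this]
    abel
  exact this

lemma subderiv_comp_eq {n m : ℕ} {F : EuclideanSpace ℝ (Fin n) → EuclideanSpace ℝ (Fin m)}
    {F' : EuclideanSpace ℝ (Fin n) →L[ℝ] EuclideanSpace ℝ (Fin m)}
    {x : EuclideanSpace ℝ (Fin n)} (hF : HasFDerivAt F F' x)
    {g : EuclideanSpace ℝ (Fin m) → ℝ} (hg : ConcaveOn ℝ Set.univ g) {ℓ : NNReal}
    (hLip : LipschitzOnWith ℓ g (Metric.closedBall (F x) 1)) (w₀ : EuclideanSpace ℝ (Fin n)) :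
    subderiv (fun z => ((g (F z) : ℝ) : EReal)) x w₀
      = ((dirD g (F x) (F' w₀) : ℝ) : EReal) := by
  set l := (𝓝[>] (0:ℝ)) ×ˢ (𝓝 w₀) with hl
  have hpos : ∀ᶠ p : ℝ × EuclideanSpace ℝ (Fin n) in l, 0 < p.1 := by
    have : Set.Ioi (0:ℝ) ×ˢ (Set.univ : Set (EuclideanSpace ℝ (Fin n))) ∈ l :=
      Filter.prod_mem_prod self_mem_nhdsWithin Filter.univ_mem
    filter_upwards [this] with p hp using hp.1
  have hΦ : Tendsto (fun p : ℝ × EuclideanSpace ℝ (Fin n) =>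
      ((p.1, (p.1)⁻¹ • (F (x + p.1 • p.2) - F x)) : ℝ × EuclideanSpace ℝ (Fin m)))
      l ((𝓝[>] (0:ℝ)) ×ˢ 𝓝 (F' w₀)) := by
    rw [Filter.tendsto_prod_iff']
    exact ⟨Filter.tendsto_fst, tendsto_semideriv hF w₀⟩
  have hQ := (tendsto_gslope hg hLip (F' w₀)).comp hΦ
  have hQg : Tendsto (fun p : ℝ × EuclideanSpace ℝ (Fin n) =>
      (g (F (x + p.1 • p.2)) - g (F x)) / p.1) l (𝓝 (dirD g (F x) (F' w₀))) := by
    apply hQ.congr'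
    filter_upwards [hpos] with p hp
    have : F x + p.1 • (p.1)⁻¹ • (F (x + p.1 • p.2) - F x) = F (x + p.1 • p.2) := by
      rw [smul_inv_smul₀ hp.ne']
      abel
    simp only [Function.comp]
    rw [this]
  unfold subderiv
  have h1 : (fun p : ℝ × EuclideanSpace ℝ (Fin n) =>
      (((p.1)⁻¹ : ℝ) : EReal) * (((g (F (x + p.1 • p.2)) : ℝ) : EReal) - ((g (F x) : ℝ) : EReal)))
      = fun p => (((g (F (x + p.1 • p.2)) - g (F x)) / p.1 : ℝ) : EReal) := by
    funext p
    rw [← EReal.coe_sub, ← EReal.coe_mul]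
    congr 1
    rw [div_eq_inv_mul]
  rw [h1]
  exact ((continuous_coe_real_ereal.tendsto _).comp hQg).liminf_eq

open intervalIntegral MeasureTheory in
lemma descent_estimate {E W : Type*} [NormedAddCommGroup E] [NormedSpace ℝ E]
    [NormedAddCommGroup W] [NormedSpace ℝ W] [CompleteSpace W]
    {Ω : Set E} (hΩ : Convex ℝ Ω) {F : E → W} {F' : E → E →L[ℝ] W} {L : ℝ} (hL : 0 ≤ L)
    (hFdiff : ∀ z, HasFDerivAt F (F' z) z) (hFLip : LipschitzOnWith L.toNNReal F' Ω)
    {x y : E} (hx : x ∈ Ω) (hy : y ∈ Ω) :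
    ‖F y - F x - F' x (y - x)‖ ≤ L / 2 * ‖y - x‖ ^ 2 := by
  set γ : ℝ → E := fun t => x + t • (y - x) with hγ
  have hγmem : ∀ t ∈ Set.Icc (0:ℝ) 1, γ t ∈ Ω := by
    intro t ht
    have := hΩ hx hy (by linarith [ht.2] : (0:ℝ) ≤ 1 - t) ht.1 (by ring)
    convert this using 1
    simp only [hγ]
    module
  have hγderiv : ∀ t : ℝ, HasDerivAt γ (y - x) t := by
    intro t
    simpa [hγ] using ((hasDerivAt_id t).smul_const (y - x)).const_add x
  set d : ℝ → W := fun t => (F' (γ t)) (y - x) with hd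
  have hderiv : ∀ t : ℝ, HasDerivAt (fun s => F (γ s)) (d t) t := by
    intro t
    exact (hFdiff (γ t)).comp_hasDerivAt t (hγderiv t)
  have hγcont : Continuous γ := by continuity
  have hdcont : ContinuousOn d (Set.Icc 0 1) := by
    apply ContinuousOn.clm_apply _ continuousOn_const
    exact hFLip.continuousOn.comp (hγcont.continuousOn) hγmem
  have hint : IntervalIntegrable d volume 0 1 := by
    apply ContinuousOn.intervalIntegrable
    rwa [Set.uIcc_of_le zero_le_one]
  have heq : ∫ t in (0:ℝ)..1, d t = F y - F x := by
    have := integral_eq_sub_of_hasDerivAt (fun t _ => hderiv t) hint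
    simpa [hγ] using this
  have hconst : ∫ t in (0:ℝ)..1, (F' x) (y - x) = (F' x) (y - x) := by
    rw [intervalIntegral.integral_const]; simp
  have hsplit : F y - F x - F' x (y - x) = ∫ t in (0:ℝ)..1, (d t - F' x (y - x)) := by
    rw [integral_sub hint intervalIntegrable_const, heq, hconst]
  rw [hsplit]
  have hbound : ∀ t ∈ Set.Ioc (0:ℝ) 1, ‖d t - F' x (y - x)‖ ≤ L * ‖y - x‖ ^ 2 * t := by
    intro t ht
    have hmem : γ t ∈ Ω := hγmem t ⟨ht.1.le, ht.2⟩
    have hdist := hFLip.dist_le_mul _ hmem _ hx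
    rw [dist_eq_norm, dist_eq_norm] at hdist
    have hγx : ‖γ t - x‖ = t * ‖y - x‖ := by
      simp only [hγ, add_sub_cancel_left]
      rw [norm_smul, Real.norm_eq_abs, abs_of_pos ht.1]
    rw [hγx, Real.coe_toNNReal _ hL] at hdist
    have happ : d t - F' x (y - x) = (F' (γ t) - F' x) (y - x) := by
      simp [hd]
    rw [happ]
    calc ‖(F' (γ t) - F' x) (y - x)‖ ≤ ‖F' (γ t) - F' x‖ * ‖y - x‖ :=
          (F' (γ t) - F' x).le_opNorm (y - x)
      _ ≤ L * (t * ‖y - x‖) * ‖y - x‖ :=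
          mul_le_mul_of_nonneg_right hdist (norm_nonneg _)
      _ = L * ‖y - x‖ ^ 2 * t := by ring
  have hgint : IntervalIntegrable (fun t => L * ‖y - x‖ ^ 2 * t) volume 0 1 :=
    (continuous_const.mul continuous_id).intervalIntegrable 0 1
  have h1 : ‖∫ t in (0:ℝ)..1, (d t - F' x (y - x))‖
      ≤ |∫ t in (0:ℝ)..1, L * ‖y - x‖ ^ 2 * t| := by
    apply intervalIntegral.norm_integral_le_abs_of_norm_le _ hgint
    rw [Set.uIoc_of_le zero_le_one]
    filter_upwards [ae_restrict_mem measurableSet_Ioc] with t ht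
    exact hbound t ht
  have h2 : ∫ t in (0:ℝ)..1, L * ‖y - x‖ ^ 2 * t = L / 2 * ‖y - x‖ ^ 2 := by
    rw [intervalIntegral.integral_const_mul, integral_id]
    ring
  rw [h2] at h1
  calc ‖∫ t in (0:ℝ)..1, (d t - F' x (y - x))‖ ≤ |L / 2 * ‖y - x‖ ^ 2| := h1
    _ = L / 2 * ‖y - x‖ ^ 2 := abs_of_nonneg (by positivity)

end DescentHelpers

open Pointwise

/-- if `Ω` is convex and compact, `F` is `L`-smooth on `Ω` (differentiable
with its derivative `L`-Lipschitz on `Ω`), and `g` is a finite-valued concave function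
which is `ℓ`-Lipschitz on `F(Ω) + B`, then `g ∘ F` has the descent property on `Ω`
with constant `ℓ·L`:  for all `x, y ∈ Ω`,
`g(F(y)) ≤ g(F(x)) + dg(F(x))(∇F(x)(y − x)) + (ℓL/2)‖y − x‖²`, where
`dg(F(x))(∇F(x)(y − x)) = d(g ∘ F)(x)(y − x)`. -/
theorem concave_comp_smooth_descent_property {n m : ℕ}
    (Ω : Set (EuclideanSpace ℝ (Fin n))) (hΩconv : Convex ℝ Ω) (hΩcomp : IsCompact Ω)
    (F : EuclideanSpace ℝ (Fin n) → EuclideanSpace ℝ (Fin m))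
    (F' : EuclideanSpace ℝ (Fin n) → (EuclideanSpace ℝ (Fin n) →L[ℝ] EuclideanSpace ℝ (Fin m)))
    (L ℓ : ℝ) (hL : 0 < L) (hℓ : 0 ≤ ℓ)
    -- `F` is `L`-smooth on `Ω`: differentiable, with `∇F` Lipschitz with constant `L` on `Ω`
    (hFdiff : ∀ z, HasFDerivAt F (F' z) z)
    (hFLip : LipschitzOnWith (Real.toNNReal L) F' Ω)
    (g : EuclideanSpace ℝ (Fin m) → ℝ)
    -- `g` is a finite-valued concave function
    (hgconc : ConcaveOn ℝ Set.univ g)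
    -- with Lipschitz constant `ℓ` on `F(Ω)` fattened by the unit ball
    (hgLip : LipschitzOnWith (Real.toNNReal ℓ) g (F '' Ω + Metric.closedBall 0 1)) :
    ∀ x ∈ Ω, ∀ y ∈ Ω,
      (((g (F y) : ℝ) : EReal) ≤ ((g (F x) : ℝ) : EReal) +
          subderiv (fun u => ((g u : ℝ) : EReal)) (F x) (F' x (y - x)) +
          (((ℓ * L / 2) * ‖y - x‖ ^ 2 : ℝ) : EReal)) ∧
        subderiv (fun u => ((g u : ℝ) : EReal)) (F x) (F' x (y - x)) =
          subderiv (fun z => ((g (F z) : ℝ) : EReal)) x (y - x) := by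
  intro x hx y hy
  set v := F x with hv
  set w := F' x (y - x) with hw
  have hball : Metric.closedBall v 1 ⊆ F '' Ω + Metric.closedBall 0 1 := by
    intro u hu
    rw [Metric.mem_closedBall, dist_eq_norm] at hu
    have : v + (u - v) ∈ F '' Ω + Metric.closedBall 0 1 := by
      refine Set.add_mem_add (Set.mem_image_of_mem F hx) ?_
      rwa [Metric.mem_closedBall, dist_zero_right]
    simpa using this
  have hLip' : LipschitzOnWith (Real.toNNReal ℓ) g (Metric.closedBall v 1) := hgLip.mono hball
  have heq2 : subderiv (fun u => ((g u : ℝ) : EReal)) v w = ((dirD g v w : ℝ) : EReal) :=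
    subderiv_eq_dirD hgconc hLip' w
  have heq3 : subderiv (fun z => ((g (F z) : ℝ) : EReal)) x (y - x)
      = ((dirD g v (F' x (y - x)) : ℝ) : EReal) :=
    subderiv_comp_eq (hFdiff x) hgconc hLip' (y - x)
  have hpart2 : subderiv (fun u => ((g u : ℝ) : EReal)) v w
      = subderiv (fun z => ((g (F z) : ℝ) : EReal)) x (y - x) := by
    rw [heq2, heq3]
  refine ⟨?_, hpart2⟩
  -- the real inequality
  set e := F y - F x - w with he
  have hedesc : ‖e‖ ≤ L / 2 * ‖y - x‖ ^ 2 :=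
    descent_estimate hΩconv hL.le hFdiff hFLip hx hy
  have hco : ((Real.toNNReal ℓ : NNReal) : ℝ) = ℓ := Real.coe_toNNReal _ hℓ
  have hg1 : g (F y) - g v ≤ dirD g v (F y - v) := by
    have := sub_le_dirD hgconc hLip' (F y - v)
    rwa [add_sub_cancel] at this
  have hsum : w + e = F y - v := by rw [he, hv]; abel
  have hg2 : dirD g v (F y - v) ≤ dirD g v w + ℓ * ‖e‖ := by
    have := dirD_add_le hgconc hLip' w e
    rw [hsum, hco] at this
    exact this
  have hg3 : ℓ * ‖e‖ ≤ ℓ * L / 2 * ‖y - x‖ ^ 2 := by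
    calc ℓ * ‖e‖ ≤ ℓ * (L / 2 * ‖y - x‖ ^ 2) := mul_le_mul_of_nonneg_left hedesc hℓ
      _ = ℓ * L / 2 * ‖y - x‖ ^ 2 := by ring
  have hreal : g (F y) ≤ g v + dirD g v w + ℓ * L / 2 * ‖y - x‖ ^ 2 := by linarith
  rw [heq2, ← EReal.coe_add, ← EReal.coe_add]
  exact_mod_cast hreal
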